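/- Let λ ∈ ℂ ∪ {∞} and let W_A(λ) be the Lie algebra defined below. Then the second Lie algebra cohomology HH²(W_A(λ)) of W_A(λ) with trivial coefficients ℂ has dimension 3 if λ = 0, and dimension 2 if λ ≠ 0. -/

import Mathlib

set_option maxSynthPendingDepth 2

/-- The coefficient `n(n+1)λ`, where `λ = ∞` (encoded by `none`) gives `n²`. -/
def lamTerm (lam : Option ℂ) (n : ℤ) : ℂ :=
  match lam with
  | some l => (n : ℂ) * ((n : ℂ) + 1) * l
  | none => (n : ℂ) ^ 2

/-- The space of 2-cocycles of a complex Lie algebra with trivial coefficients: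
alternating bilinear maps `Ω : L × L → ℂ` satisfying the cocycle identity. -/
noncomputable def twoCocycles (L : Type) [LieRing L] [LieAlgebra ℂ L] :
    Submodule ℂ (L →ₗ[ℂ] L →ₗ[ℂ] ℂ) where
  carrier := {Ω | (∀ x : L, Ω x x = 0) ∧
    ∀ x y z : L, Ω ⁅x, y⁆ z + Ω ⁅y, z⁆ x + Ω ⁅z, x⁆ y = 0}
  add_mem' := by
    rintro a b ⟨ha1, ha2⟩ ⟨hb1, hb2⟩
    refine ⟨fun x => ?_, fun x y z => ?_⟩
    · simp [LinearMap.add_apply, ha1 x, hb1 x]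
    · simp only [LinearMap.add_apply]
      linear_combination ha2 x y z + hb2 x y z
  zero_mem' := by
    refine ⟨fun x => by simp, fun x y z => by simp⟩
  smul_mem' := by
    rintro c a ⟨ha1, ha2⟩
    refine ⟨fun x => ?_, fun x y z => ?_⟩
    · simp [LinearMap.smul_apply, ha1 x]
    · simp only [LinearMap.smul_apply, smul_eq_mul]
      linear_combination c * ha2 x y z

/-- The space of 2-coboundaries of a complex Lie algebra with trivial coefficients:
bilinear maps of the form `(x, y) ↦ ψ ⁅x, y⁆` for a linear functional `ψ`. -/
noncomputable def twoCoboundaries (L : Type) [LieRing L] [LieAlgebra ℂ L] :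
    Submodule ℂ (L →ₗ[ℂ] L →ₗ[ℂ] ℂ) where
  carrier := {Ω | ∃ ψ : L →ₗ[ℂ] ℂ, ∀ x y : L, Ω x y = ψ ⁅x, y⁆}
  add_mem' := by
    rintro a b ⟨ψ₁, h₁⟩ ⟨ψ₂, h₂⟩
    exact ⟨ψ₁ + ψ₂, fun x y => by simp [LinearMap.add_apply, h₁ x y, h₂ x y]⟩
  zero_mem' := ⟨0, fun x y => by simp⟩
  smul_mem' := by
    rintro c a ⟨ψ, h⟩
    exact ⟨c • ψ, fun x y => by simp [LinearMap.smul_apply, h x y]⟩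


section Infra

variable {L : Type} [LieRing L] [LieAlgebra ℂ L] (b : Module.Basis (ℤ ⊕ ℤ) ℂ L)

/-- The bracket as a bilinear map. -/
noncomputable def brkt (L : Type) [LieRing L] [LieAlgebra ℂ L] : L →ₗ[ℂ] L →ₗ[ℂ] L :=
  LinearMap.mk₂ ℂ (fun x y => ⁅x, y⁆) add_lie smul_lie lie_add lie_smul

@[simp] lemma brkt_apply (x y : L) : brkt L x y = ⁅x, y⁆ := rfl

/-- Rotate a trilinear map. -/
noncomputable def rot (S : L →ₗ[ℂ] L →ₗ[ℂ] L →ₗ[ℂ] ℂ) : L →ₗ[ℂ] L →ₗ[ℂ] L →ₗ[ℂ] ℂ :=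
  (LinearMap.lflip.comp S).flip

@[simp] lemma rot_apply (S : L →ₗ[ℂ] L →ₗ[ℂ] L →ₗ[ℂ] ℂ) (x y z : L) :
    rot S x y z = S y z x := rfl

/-- The trilinear cocycle expression. -/
noncomputable def triJ (B : L →ₗ[ℂ] L →ₗ[ℂ] ℂ) : L →ₗ[ℂ] L →ₗ[ℂ] L →ₗ[ℂ] ℂ :=
  (brkt L).compr₂ B + rot ((brkt L).compr₂ B) + rot (rot ((brkt L).compr₂ B))

lemma triJ_apply (B : L →ₗ[ℂ] L →ₗ[ℂ] ℂ) (x y z : L) :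
    triJ B x y z = B ⁅x, y⁆ z + B ⁅y, z⁆ x + B ⁅z, x⁆ y := rfl

/-- Build a bilinear form from coefficients on the basis. -/
noncomputable def mkB (c : (ℤ ⊕ ℤ) → (ℤ ⊕ ℤ) → ℂ) : L →ₗ[ℂ] L →ₗ[ℂ] ℂ :=
  b.constr ℂ (fun i => b.constr ℂ (c i))

@[simp] lemma mkB_apply (c : (ℤ ⊕ ℤ) → (ℤ ⊕ ℤ) → ℂ) (i j : ℤ ⊕ ℤ) :
    mkB b c (b i) (b j) = c i j := by
  simp [mkB, Module.Basis.constr_basis]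

lemma ext₂ {F G : L →ₗ[ℂ] L →ₗ[ℂ] ℂ} (h : ∀ i j, F (b i) (b j) = G (b i) (b j)) : F = G :=
  b.ext fun i => b.ext fun j => h i j

lemma mem_twoCocycles_of_basis (B : L →ₗ[ℂ] L →ₗ[ℂ] ℂ)
    (hsk : ∀ i j, B (b i) (b j) = -B (b j) (b i))
    (hco : ∀ i j k, B ⁅b i, b j⁆ (b k) + B ⁅b j, b k⁆ (b i) + B ⁅b k, b i⁆ (b j) = 0) :
    B ∈ twoCocycles L := by
  have hflip : B = -B.flip := ext₂ b fun i j => by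
    simpa using hsk i j
  constructor
  · intro x
    have : B x x = (-B.flip) x x := by rw [← hflip]
    simp only [LinearMap.neg_apply, LinearMap.flip_apply] at this
    linear_combination this / 2
  · intro x y z
    have hJ : triJ B = 0 := b.ext fun i => b.ext fun j => b.ext fun k => by
      simpa [triJ_apply] using hco i j k
    have := LinearMap.congr_fun (LinearMap.congr_fun (LinearMap.congr_fun hJ x) y) z
    simpa [triJ_apply] using this

end Infra

section Eqs

variable {lam : Option ℂ} {L : Type} [LieRing L] [LieAlgebra ℂ L] {b : Module.Basis (ℤ ⊕ ℤ) ℂ L}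

/-- coefficient of `[L_n, A_m]`. -/
noncomputable def cc (lam : Option ℂ) (n m : ℤ) : ℂ :=
  (n : ℂ) + (m : ℂ) + (if m = 0 then lamTerm lam n else 0)

@[simp] lemma lamTerm_zero (lam : Option ℂ) : lamTerm lam 0 = 0 := by
  cases lam <;> simp [lamTerm]

lemma lamTerm_sub (lam : Option ℂ) (n : ℤ) :
    lamTerm lam n - lamTerm lam (-n) = (n : ℂ) * (lamTerm lam 1 - lamTerm lam (-1)) := by
  cases lam <;> simp [lamTerm] <;> push_cast <;> ring

variable (hLL : ∀ n m : ℤ,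
      ⁅b (Sum.inl n), b (Sum.inl m)⁆ = ((m : ℂ) - (n : ℂ)) • b (Sum.inl (n + m)))
    (hLA : ∀ n m : ℤ,
      ⁅b (Sum.inl n), b (Sum.inr m)⁆ =
        ((n : ℂ) + (m : ℂ) + (if m = 0 then lamTerm lam n else 0)) • b (Sum.inr (n + m)))
    (hAA : ∀ n m : ℤ, ⁅b (Sum.inr n), b (Sum.inr m)⁆ = 0)
    (Ω : L →ₗ[ℂ] L →ₗ[ℂ] ℂ)
    (h1 : ∀ x : L, Ω x x = 0)
    (h2 : ∀ x y z : L, Ω ⁅x, y⁆ z + Ω ⁅y, z⁆ x + Ω ⁅z, x⁆ y = 0)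

section
include h1

lemma skew (x y : L) : Ω x y = - Ω y x := by
  have h := h1 (x + y)
  simp only [map_add, LinearMap.add_apply, h1 x, h1 y] at h
  linear_combination h

end

include hLL hLA hAA h1 h2

lemma eqLLL (n m k : ℤ) :
    ((m : ℂ) - n) * Ω (b (Sum.inl (n + m))) (b (Sum.inl k))
      + ((k : ℂ) - m) * Ω (b (Sum.inl (m + k))) (b (Sum.inl n))
      + ((n : ℂ) - k) * Ω (b (Sum.inl (k + n))) (b (Sum.inl m)) = 0 := by
  have h := h2 (b (Sum.inl n)) (b (Sum.inl m)) (b (Sum.inl k))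
  rw [hLL n m, hLL m k, hLL k n] at h
  simpa [smul_eq_mul] using h

lemma eqLLA (n m k : ℤ) :
    ((m : ℂ) - n) * Ω (b (Sum.inl (n + m))) (b (Sum.inr k))
      + cc lam m k * Ω (b (Sum.inr (m + k))) (b (Sum.inl n))
      - cc lam n k * Ω (b (Sum.inr (n + k))) (b (Sum.inl m)) = 0 := by
  have h := h2 (b (Sum.inl n)) (b (Sum.inl m)) (b (Sum.inr k))
  rw [hLL n m, hLA m k, ← lie_skew (b (Sum.inr k)) (b (Sum.inl n)), hLA n k] at h
  simp only [map_smul, map_neg, smul_eq_mul, LinearMap.smul_apply, LinearMap.neg_apply,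
    LinearMap.map_neg] at h
  rw [show ((n:ℂ) + k + (if k = 0 then lamTerm lam n else 0)) = cc lam n k from rfl,
    show ((m:ℂ) + k + (if k = 0 then lamTerm lam m else 0)) = cc lam m k from rfl] at h
  linear_combination h

lemma eqLAA (n m k : ℤ) :
    cc lam n m * Ω (b (Sum.inr (n + m))) (b (Sum.inr k))
      - cc lam n k * Ω (b (Sum.inr (n + k))) (b (Sum.inr m)) = 0 := by
  have h := h2 (b (Sum.inl n)) (b (Sum.inr m)) (b (Sum.inr k))
  rw [hLA n m, hAA m k, ← lie_skew (b (Sum.inr k)) (b (Sum.inl n)), hLA n k] at h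
  simp only [map_smul, map_neg, map_zero, smul_eq_mul, LinearMap.smul_apply,
    LinearMap.neg_apply, LinearMap.zero_apply, LinearMap.map_neg] at h
  rw [show ((n:ℂ) + k + (if k = 0 then lamTerm lam n else 0)) = cc lam n k from rfl,
    show ((n:ℂ) + m + (if m = 0 then lamTerm lam n else 0)) = cc lam n m from rfl] at h
  linear_combination h

end Eqs
section Derived

variable {lam : Option ℂ} {L : Type} [LieRing L] [LieAlgebra ℂ L] {b : Module.Basis (ℤ ⊕ ℤ) ℂ L}

@[simp] lemma cc_zero_right (n : ℤ) : cc lam n 0 = (n : ℂ) + lamTerm lam n := by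
  simp [cc]

lemma cc_of_ne (n : ℤ) {m : ℤ} (h : m ≠ 0) : cc lam n m = (n : ℂ) + m := by
  simp [cc, h]

lemma cc_zero_left (n : ℤ) : cc lam 0 n = (n : ℂ) := by
  by_cases h : n = 0 <;> simp [cc, h]

variable (hLL : ∀ n m : ℤ,
      ⁅b (Sum.inl n), b (Sum.inl m)⁆ = ((m : ℂ) - (n : ℂ)) • b (Sum.inl (n + m)))
    (hLA : ∀ n m : ℤ,
      ⁅b (Sum.inl n), b (Sum.inr m)⁆ =
        ((n : ℂ) + (m : ℂ) + (if m = 0 then lamTerm lam n else 0)) • b (Sum.inr (n + m)))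
    (hAA : ∀ n m : ℤ, ⁅b (Sum.inr n), b (Sum.inr m)⁆ = 0)
    (Ω : L →ₗ[ℂ] L →ₗ[ℂ] ℂ)
    (h1 : ∀ x : L, Ω x x = 0)
    (h2 : ∀ x y z : L, Ω ⁅x, y⁆ z + Ω ⁅y, z⁆ x + Ω ⁅z, x⁆ y = 0)

include hLL hLA hAA h1 h2

/-- generic relation for `β n = Ω (L n) (A (-n))`. -/
lemma betaRel1 (n m : ℤ) (hnm : n + m ≠ 0) :
    ((m : ℂ) - n) * Ω (b (Sum.inl (n + m))) (b (Sum.inr (-(n + m))))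
      + n * Ω (b (Sum.inl n)) (b (Sum.inr (-n)))
      - m * Ω (b (Sum.inl m)) (b (Sum.inr (-m))) = 0 := by
  have h := eqLLA hLL hLA hAA Ω h1 h2 n m (-(n + m))
  rw [cc_of_ne m (by omega), cc_of_ne n (by omega),
    show m + -(n + m) = -n by ring, show n + -(n + m) = -m by ring] at h
  rw [skew Ω h1 (b (Sum.inr (-n))) (b (Sum.inl n)),
    skew Ω h1 (b (Sum.inr (-m))) (b (Sum.inl m))] at h
  push_cast at h ⊢
  linear_combination h

/-- special relation for `β` involving `β 0`. -/
lemma betaRel2 (n : ℤ) :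
    2 * (n : ℂ) * Ω (b (Sum.inl 0)) (b (Sum.inr 0))
      = ((n : ℂ) - lamTerm lam (-n)) * Ω (b (Sum.inl n)) (b (Sum.inr (-n)))
      + ((n : ℂ) + lamTerm lam n) * Ω (b (Sum.inl (-n))) (b (Sum.inr n)) := by
  have h := eqLLA hLL hLA hAA Ω h1 h2 n (-n) 0
  rw [cc_zero_right, cc_zero_right, show n + -n = 0 by ring, show (-n) + 0 = -n by ring,
    show n + (0:ℤ) = n by ring] at h
  rw [skew Ω h1 (b (Sum.inr (-n))) (b (Sum.inl n)),
    skew Ω h1 (b (Sum.inr n)) (b (Sum.inl (-n)))] at h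
  push_cast at h ⊢
  linear_combination -h

/-- `β (-1) = 0` when `lam ≠ some 0`, given `β 1 = 0`. -/
lemma beta_neg_one (hlam : lam ≠ some 0)
    (hb1 : Ω (b (Sum.inl 1)) (b (Sum.inr (-1))) = 0) :
    Ω (b (Sum.inl (-1))) (b (Sum.inr 1)) = 0 := by
  set x := Ω (b (Sum.inl (-1))) (b (Sum.inr 1)) with hx
  have r1 := betaRel1 hLL hLA hAA Ω h1 h2 (-1) 2 (by norm_num)
  have r2 := betaRel1 hLL hLA hAA Ω h1 h2 1 (-2) (by norm_num)
  norm_num at r1 r2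
  have hB2 : Ω (b (Sum.inl 2)) (b (Sum.inr (-2))) = -x/2 := by
    linear_combination -r1/2 + (3/2 : ℂ) * hb1
  have hBm2 : Ω (b (Sum.inl (-2))) (b (Sum.inr 2)) = 3*x/2 := by
    linear_combination r2/2 - hb1/2
  have e1 := betaRel2 hLL hLA hAA Ω h1 h2 1
  have e2 := betaRel2 hLL hLA hAA Ω h1 h2 2
  rcases lam with - | l
  · simp only [lamTerm] at e1 e2
    push_cast at e1 e2
    have e1' : Ω (b (Sum.inl 0)) (b (Sum.inr 0)) = x := by linear_combination e1/2
    have e2' : 4 * Ω (b (Sum.inl 0)) (b (Sum.inr 0))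
        = -2 * Ω (b (Sum.inl 2)) (b (Sum.inr (-2)))
          + 6 * Ω (b (Sum.inl (-2))) (b (Sum.inr 2)) := by linear_combination e2
    linear_combination (4*e1' - e2' + 2*hB2 - 6*hBm2)/6
  · have hl : l ≠ 0 := fun h => hlam (by rw [h])
    simp only [lamTerm] at e1 e2
    push_cast at e1 e2
    have e1' : 2 * Ω (b (Sum.inl 0)) (b (Sum.inr 0)) = (1+2*l) * x := by
      linear_combination e1 + hb1
    have e2' : 4 * Ω (b (Sum.inl 0)) (b (Sum.inr 0))
        = (2-2*l) * Ω (b (Sum.inl 2)) (b (Sum.inr (-2)))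
          + (2+6*l) * Ω (b (Sum.inl (-2))) (b (Sum.inr 2)) := by linear_combination e2
    have h6 : 6 * l * x = 0 := by
      linear_combination 2*e1' - e2' - (2-2*l)*hB2 - (2+6*l)*hBm2
    have := mul_eq_zero.mp h6
    rcases this with h | h
    · rcases mul_eq_zero.mp h with h' | h'
      · norm_num at h'
      · exact absurd h' hl
    · exact h

end Derived
section Main

variable {lam : Option ℂ} {L : Type} [LieRing L] [LieAlgebra ℂ L] {b : Module.Basis (ℤ ⊕ ℤ) ℂ L}

variable (hLL : ∀ n m : ℤ,
      ⁅b (Sum.inl n), b (Sum.inl m)⁆ = ((m : ℂ) - (n : ℂ)) • b (Sum.inl (n + m)))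
    (hLA : ∀ n m : ℤ,
      ⁅b (Sum.inl n), b (Sum.inr m)⁆ =
        ((n : ℂ) + (m : ℂ) + (if m = 0 then lamTerm lam n else 0)) • b (Sum.inr (n + m)))
    (hAA : ∀ n m : ℤ, ⁅b (Sum.inr n), b (Sum.inr m)⁆ = 0)
    (Ω : L →ₗ[ℂ] L →ₗ[ℂ] ℂ)
    (h1 : ∀ x : L, Ω x x = 0)
    (h2 : ∀ x y z : L, Ω ⁅x, y⁆ z + Ω ⁅y, z⁆ x + Ω ⁅z, x⁆ y = 0)

include hLL hLA hAA h1 h2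

lemma ker_to_cobound
    (hα2 : Ω (b (Sum.inl 2)) (b (Sum.inl (-2))) = 2 * Ω (b (Sum.inl 1)) (b (Sum.inl (-1))))
    (hβ1 : Ω (b (Sum.inl 1)) (b (Sum.inr (-1))) = 0)
    (hβm1 : Ω (b (Sum.inl (-1))) (b (Sum.inr 1)) = 0) :
    ∃ ψ : L →ₗ[ℂ] ℂ, ∀ x y : L, Ω x y = ψ ⁅x, y⁆ := by
  have sk := skew Ω h1
  -- Step 1: α n = n • κ
  have hrec : ∀ n : ℤ, ((1 : ℂ) - n) * Ω (b (Sum.inl (n+1))) (b (Sum.inl (-(n+1))))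
      + ((n : ℂ) + 2) * Ω (b (Sum.inl n)) (b (Sum.inl (-n)))
      - (2*(n:ℂ)+1) * Ω (b (Sum.inl 1)) (b (Sum.inl (-1))) = 0 := by
    intro n
    have h := eqLLL hLL hLA hAA Ω h1 h2 n 1 (-n-1)
    rw [show (1 : ℤ) + (-n-1) = -n by ring, show (-n-1) + n = -1 by ring,
      show -n-1 = -(n+1) by ring] at h
    rw [sk (b (Sum.inl (-n))) (b (Sum.inl n)), sk (b (Sum.inl (-1))) (b (Sum.inl 1))] at h
    push_cast at h ⊢
    linear_combination h
  have hαpos : ∀ n : ℤ, 2 ≤ n → Ω (b (Sum.inl n)) (b (Sum.inl (-n)))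
      = (n : ℂ) * Ω (b (Sum.inl 1)) (b (Sum.inl (-1))) := by
    refine Int.le_induction ?_ ?_
    · push_cast; linear_combination hα2
    · intro n hn ih
      have h := hrec n
      rw [ih] at h
      have h0 : (1 : ℂ) - n ≠ 0 := by
        intro hc
        have h3 : (n : ℂ) = 1 := by linear_combination -hc
        have : n = 1 := by exact_mod_cast h3
        omega
      push_cast
      apply mul_left_cancel₀ h0
      linear_combination h
  have hα : ∀ n : ℤ, Ω (b (Sum.inl n)) (b (Sum.inl (-n)))
      = (n : ℂ) * Ω (b (Sum.inl 1)) (b (Sum.inl (-1))) := by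
    have hge1 : ∀ n : ℤ, 1 ≤ n → Ω (b (Sum.inl n)) (b (Sum.inl (-n)))
        = (n : ℂ) * Ω (b (Sum.inl 1)) (b (Sum.inl (-1))) := by
      intro n hn
      rcases eq_or_lt_of_le hn with h | h
      · rw [← h]; push_cast; rw [one_mul]
      · exact hαpos n (by omega)
    intro n
    rcases lt_trichotomy n 0 with h | h | h
    · have h' := hge1 (-n) (by omega)
      rw [sk, show -(-n) = n by ring] at h'
      push_cast at h' ⊢
      linear_combination -h'
    · subst h; simpa using h1 (b (Sum.inl 0))
    · exact hge1 n (by omega)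
  -- Step 2: β n = 0
  have hβ : ∀ n : ℤ, Ω (b (Sum.inl n)) (b (Sum.inr (-n))) = 0 := by
    have hb2 : Ω (b (Sum.inl 2)) (b (Sum.inr (-2))) = 0 := by
      have h := betaRel1 hLL hLA hAA Ω h1 h2 (-1) 2 (by norm_num)
      norm_num at h
      linear_combination -h/2 + (3/2 : ℂ) * hβ1 - hβm1/2
    have hbm2 : Ω (b (Sum.inl (-2))) (b (Sum.inr 2)) = 0 := by
      have h := betaRel1 hLL hLA hAA Ω h1 h2 1 (-2) (by norm_num)
      norm_num at h
      linear_combination h/2 - hβ1/2 + (3/2 : ℂ) * hβm1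
    have hbpos : ∀ n : ℤ, 1 ≤ n → Ω (b (Sum.inl n)) (b (Sum.inr (-n))) = 0 := by
      refine Int.le_induction ?_ ?_
      · exact hβ1
      · intro n hn ih
        rcases eq_or_lt_of_le hn with h | h
        · rw [← h]; exact hb2
        · have hr := betaRel1 hLL hLA hAA Ω h1 h2 n 1 (by omega)
          rw [ih, hβ1] at hr
          have h0 : (1 : ℂ) - n ≠ 0 := by
            intro hc
            have : (n : ℂ) = 1 := by linear_combination -hc
            have : n = 1 := by exact_mod_cast this
            omega
          apply mul_left_cancel₀ h0
          push_cast at hr ⊢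
          linear_combination hr
    have hbneg : ∀ n : ℤ, 1 ≤ n → Ω (b (Sum.inl (-n))) (b (Sum.inr n)) = 0 := by
      refine Int.le_induction ?_ ?_
      · exact hβm1
      · intro n hn ih
        rcases eq_or_lt_of_le hn with h | h
        · rw [← h]; exact hbm2
        · have hr := betaRel1 hLL hLA hAA Ω h1 h2 (-n) (-1) (by omega)
          rw [show (-n) + (-1) = -(n+1) by ring, show -(-n) = n by ring,
            show -(-1) = (1:ℤ) by ring, show -(-(n+1)) = n+1 by ring] at hr
          rw [ih, hβm1] at hr
          have h0 : (-1 : ℂ) + n ≠ 0 := by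
            intro hc
            have : (n : ℂ) = 1 := by linear_combination hc
            have : n = 1 := by exact_mod_cast this
            omega
          apply mul_left_cancel₀ h0
          push_cast at hr ⊢
          linear_combination hr
    intro n
    rcases lt_trichotomy n 0 with h | h | h
    · have h' := hbneg (-n) (by omega)
      rwa [show -(-n) = n by ring] at h'
    · subst h
      have h := betaRel2 hLL hLA hAA Ω h1 h2 1
      rw [hβ1, hβm1] at h
      simp only [neg_zero]
      push_cast at h
      linear_combination h/2
    · exact hbpos n (by omega)
  -- Step 3: Ω (A n) (A m) = 0 for all n m
  have hAAz : ∀ n m : ℤ, Ω (b (Sum.inr n)) (b (Sum.inr m)) = 0 := by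
    have hγ1 : Ω (b (Sum.inr 1)) (b (Sum.inr (-1))) = 0 := by
      have v1 : (1 + lamTerm lam 1) * Ω (b (Sum.inr 1)) (b (Sum.inr (-1))) = 0 := by
        have v := eqLAA hLL hLA hAA Ω h1 h2 1 0 (-1)
        rw [show (1:ℤ)+0 = 1 by ring, show (1:ℤ)+(-1) = 0 by ring, h1 (b (Sum.inr 0)),
          cc_zero_right] at v
        push_cast at v ⊢
        linear_combination v
      have v2 : (2 + lamTerm lam 2) * Ω (b (Sum.inr 2)) (b (Sum.inr (-2))) = 0 := by
        have v := eqLAA hLL hLA hAA Ω h1 h2 2 0 (-2)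
        rw [show (2:ℤ)+0 = 2 by ring, show (2:ℤ)+(-2) = 0 by ring, h1 (b (Sum.inr 0)),
          cc_zero_right] at v
        push_cast at v ⊢
        linear_combination v
      have rec2 : 2 * Ω (b (Sum.inr 2)) (b (Sum.inr (-2)))
          = Ω (b (Sum.inr 1)) (b (Sum.inr (-1))) := by
        have v := eqLAA hLL hLA hAA Ω h1 h2 1 1 (-2)
        rw [show (1:ℤ)+1 = 2 by ring, show (1:ℤ)+(-2) = -1 by ring,
          cc_of_ne 1 (by norm_num : (1:ℤ) ≠ 0), cc_of_ne 1 (by norm_num : (-2:ℤ) ≠ 0),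
          sk (b (Sum.inr (-1))) (b (Sum.inr 1))] at v
        push_cast at v ⊢
        linear_combination v
      rcases lam with - | l
      · simp only [lamTerm] at v1
        push_cast at v1
        linear_combination v1/2
      · simp only [lamTerm] at v1 v2
        push_cast at v1 v2
        linear_combination 3*v1 - 2*v2 + ((2:ℂ)+6*l)*rec2
    have hγ : ∀ n : ℤ, Ω (b (Sum.inr n)) (b (Sum.inr (-n))) = 0 := by
      intro n
      rcases eq_or_ne n 0 with h | h
      · subst h; exact h1 _
      · have hr := eqLAA hLL hLA hAA Ω h1 h2 (n-1) 1 (-n)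
        rw [show n - 1 + 1 = n by ring, show n - 1 + -n = -1 by ring] at hr
        rw [cc_of_ne _ (by norm_num : (1:ℤ) ≠ 0), cc_of_ne _ (by omega : -n ≠ 0)] at hr
        rw [sk (b (Sum.inr (-1))) (b (Sum.inr 1))] at hr
        rw [hγ1] at hr
        have h0 : (n : ℂ) ≠ 0 := Int.cast_ne_zero.mpr h
        have : (n : ℂ) * Ω (b (Sum.inr n)) (b (Sum.inr (-n))) = 0 := by
          push_cast at hr ⊢
          linear_combination hr
        rcases mul_eq_zero.mp this with h' | h'
        · exact absurd h' h0
        · exact h'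
    intro n m
    rcases eq_or_ne (n + m) 0 with h | h
    · have : m = -n := by omega
      subst this; exact hγ n
    · have hg := eqLAA hLL hLA hAA Ω h1 h2 0 n m
      rw [cc_zero_left, cc_zero_left, zero_add, zero_add] at hg
      rw [sk (b (Sum.inr m)) (b (Sum.inr n))] at hg
      have h0 : (n : ℂ) + m ≠ 0 := by
        intro hc
        have : ((n + m : ℤ) : ℂ) = 0 := by push_cast; linear_combination hc
        exact h (by exact_mod_cast this)
      have : ((n : ℂ) + m) * Ω (b (Sum.inr n)) (b (Sum.inr m)) = 0 := by
        linear_combination hg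
      rcases mul_eq_zero.mp this with h' | h'
      · exact absurd h' h0
      · exact h'
  -- Step 4: general reductions
  have hLLgen : ∀ n m : ℤ, ((n : ℂ) + m) * Ω (b (Sum.inl n)) (b (Sum.inl m))
      = ((m : ℂ) - n) * Ω (b (Sum.inl 0)) (b (Sum.inl (n + m))) := by
    intro n m
    have h := eqLLL hLL hLA hAA Ω h1 h2 n m 0
    rw [show m + (0:ℤ) = m by ring, show (0:ℤ) + n = n by ring] at h
    rw [sk (b (Sum.inl (n+m))) (b (Sum.inl 0)), sk (b (Sum.inl m)) (b (Sum.inl n))] at h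
    push_cast at h ⊢
    linear_combination h
  have hLAgen : ∀ n m : ℤ, ((n : ℂ) + m) * Ω (b (Sum.inl n)) (b (Sum.inr m))
      = cc lam n m * Ω (b (Sum.inl 0)) (b (Sum.inr (n + m))) := by
    intro n m
    have h := eqLLA hLL hLA hAA Ω h1 h2 0 n m
    rw [show (0:ℤ) + n = n by ring, show (0:ℤ) + m = m by ring, cc_zero_left] at h
    rw [sk (b (Sum.inr (n+m))) (b (Sum.inl 0)), sk (b (Sum.inr m)) (b (Sum.inl n))] at h
    push_cast at h ⊢
    linear_combination h
  -- Step 5: build ψ and conclude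
  set f : ℤ ⊕ ℤ → ℂ := Sum.elim
      (fun n => if n = 0 then -(Ω (b (Sum.inl 1)) (b (Sum.inl (-1))))/2
        else Ω (b (Sum.inl 0)) (b (Sum.inl n)) / n)
      (fun n => if n = 0 then 0 else Ω (b (Sum.inl 0)) (b (Sum.inr n)) / n) with hf
  refine ⟨b.constr ℂ f, ?_⟩
  have hEq : Ω = (brkt L).compr₂ (b.constr ℂ f) := by
    have hLAcase : ∀ n m : ℤ, Ω (b (Sum.inl n)) (b (Sum.inr m))
        = b.constr ℂ f ⁅b (Sum.inl n), b (Sum.inr m)⁆ := by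
      intro n m
      rw [hLA n m, map_smul, b.constr_basis, smul_eq_mul]
      rcases eq_or_ne (n + m) 0 with h | h
      · have hm : m = -n := by omega
        subst hm
        rw [show n + -n = (0:ℤ) by ring]
        simp only [hf, Sum.elim_inr]
        rw [hβ n]
        simp
      · simp only [hf, Sum.elim_inr, if_neg h]
        have h0' : ((n : ℂ) + m) ≠ 0 := by
          have : ((n + m : ℤ) : ℂ) ≠ 0 := Int.cast_ne_zero.mpr h
          push_cast at this
          exact this
        have hg := hLAgen n m
        rw [show ((n:ℂ) + m + (if m = 0 then lamTerm lam n else 0)) = cc lam n m from rfl]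
        push_cast
        field_simp
        linear_combination hg
    apply ext₂ b
    intro i j
    simp only [LinearMap.compr₂_apply, brkt_apply]
    rcases i with n | n <;> rcases j with m | m
    · -- L L
      rw [hLL n m, map_smul, b.constr_basis, smul_eq_mul]
      rcases eq_or_ne (n + m) 0 with h | h
      · have hm : m = -n := by omega
        subst hm
        rw [show n + -n = (0:ℤ) by ring]
        simp only [hf, Sum.elim_inl]
        rw [hα n]
        simp
        push_cast
        ring
      · simp only [hf, Sum.elim_inl, if_neg h]
        have h0' : ((n : ℂ) + m) ≠ 0 := by
          have : ((n + m : ℤ) : ℂ) ≠ 0 := Int.cast_ne_zero.mpr h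
          push_cast at this
          exact this
        have hg := hLLgen n m
        push_cast
        field_simp
        linear_combination hg
    · exact hLAcase n m
    · -- A L
      rw [← lie_skew, map_neg, sk (b (Sum.inr n)) (b (Sum.inl m)), hLAcase m n]
    · -- A A
      rw [hAA n m, map_zero]
      exact hAAz n m
  intro x y
  rw [hEq]
  rfl

end Main
section Cocycles

variable {lam : Option ℂ} {L : Type} [LieRing L] [LieAlgebra ℂ L] (b : Module.Basis (ℤ ⊕ ℤ) ℂ L)

/-- Virasoro cocycle coefficients. -/
noncomputable def cV : (ℤ ⊕ ℤ) → (ℤ ⊕ ℤ) → ℂ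
  | Sum.inl n, Sum.inl m => if n + m = 0 then (n : ℂ)^3 - n else 0
  | Sum.inl _, Sum.inr _ => 0
  | Sum.inr _, Sum.inl _ => 0
  | Sum.inr _, Sum.inr _ => 0

/-- value of the `β`-cocycle. -/
noncomputable def wA (lam : Option ℂ) : ℤ → ℂ := fun n =>
  if n = 0 then 1 + (lamTerm lam 1 - lamTerm lam (-1))/2 else 1

/-- the constant `β`-cocycle coefficients. -/
noncomputable def cA (lam : Option ℂ) : (ℤ ⊕ ℤ) → (ℤ ⊕ ℤ) → ℂ
  | Sum.inl n, Sum.inr m => if n + m = 0 then wA lam n else 0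
  | Sum.inr n, Sum.inl m => if n + m = 0 then -(wA lam n) else 0
  | Sum.inl _, Sum.inl _ => 0
  | Sum.inr _, Sum.inr _ => 0

/-- the linear `β`-cocycle coefficients (case `lam = some 0`). -/
noncomputable def cB : (ℤ ⊕ ℤ) → (ℤ ⊕ ℤ) → ℂ
  | Sum.inl n, Sum.inr m => if n + m = 0 then (n : ℂ) else 0
  | Sum.inr n, Sum.inl m => if n + m = 0 then (n : ℂ) else 0
  | Sum.inl _, Sum.inl _ => 0
  | Sum.inr _, Sum.inr _ => 0

variable (hLL : ∀ n m : ℤ,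
      ⁅b (Sum.inl n), b (Sum.inl m)⁆ = ((m : ℂ) - (n : ℂ)) • b (Sum.inl (n + m)))
    (hLA : ∀ n m : ℤ,
      ⁅b (Sum.inl n), b (Sum.inr m)⁆ =
        ((n : ℂ) + (m : ℂ) + (if m = 0 then lamTerm lam n else 0)) • b (Sum.inr (n + m)))
    (hAA : ∀ n m : ℤ, ⁅b (Sum.inr n), b (Sum.inr m)⁆ = 0)

include hLA in
lemma hAL : ∀ n m : ℤ, ⁅b (Sum.inr n), b (Sum.inl m)⁆
    = -(((m : ℂ) + (n : ℂ) + (if n = 0 then lamTerm lam m else 0)) • b (Sum.inr (m + n))) := by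
  intro n m
  rw [← lie_skew, hLA]

include hLL hLA hAA

lemma cV_mem : mkB b cV ∈ twoCocycles L := by
  apply mem_twoCocycles_of_basis
  · intro i j
    rw [mkB_apply, mkB_apply]
    rcases i with n | n <;> rcases j with m | m <;> simp only [cV]
    · by_cases h : n + m = 0
      · rw [if_pos h, if_pos (by omega : m + n = 0)]
        have hm : m = -n := by omega
        subst hm; push_cast; ring1
      · rw [if_neg h, if_neg (by omega : ¬ m + n = 0)]; ring1
    all_goals ring1
  · intro i j k
    rcases i with n | n <;> rcases j with m | m <;> rcases k with p | p <;>
      simp only [hLL, hLA, hAA, hAL b hLA, map_smul, map_neg, map_zero, smul_eq_mul,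
        LinearMap.smul_apply, LinearMap.neg_apply, LinearMap.zero_apply, LinearMap.map_neg,
        mkB_apply, cV] <;>
      try ring1
    -- remaining: the L L L case
    by_cases h : n + m + p = 0
    · rw [if_pos (by omega : n + m + p = 0), if_pos (by omega : m + p + n = 0),
        if_pos (by omega : p + n + m = 0)]
      have hp : p = -n - m := by omega
      subst hp; push_cast; ring1
    · rw [if_neg (by omega : ¬ n + m + p = 0), if_neg (by omega : ¬ m + p + n = 0),
        if_neg (by omega : ¬ p + n + m = 0)]
      ring1

omit hLL hLA hAA in
lemma cA_id (n m p : ℤ) :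
    ((m : ℂ) - n) * (if n + m + p = 0 then wA lam (n + m) else 0)
      + ((m : ℂ) + p + (if p = 0 then lamTerm lam m else 0))
        * (if m + p + n = 0 then -(wA lam (m + p)) else 0)
      - ((n : ℂ) + p + (if p = 0 then lamTerm lam n else 0))
        * (if n + p + m = 0 then -(wA lam (n + p)) else 0) = 0 := by
  by_cases h : n + m + p = 0
  · rw [if_pos h, if_pos (by omega : m + p + n = 0), if_pos (by omega : n + p + m = 0)]
    by_cases hp : p = 0
    · subst hp
      rw [if_pos rfl, if_pos rfl]
      have hm : m = -n := by omega
      subst hm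
      rw [show n + -n = (0:ℤ) by ring, show -n + (0:ℤ) = -n by ring,
        show n + (0:ℤ) = n by ring]
      rcases eq_or_ne n 0 with hn | hn
      · subst hn; norm_num [lamTerm_zero]
      · simp only [wA, if_pos rfl, if_neg hn, if_neg (show ¬ (-n : ℤ) = 0 by omega)]
        push_cast
        linear_combination lamTerm_sub lam n
    · rw [if_neg hp, if_neg hp]
      have hmp : ¬ (n + m = 0) := by omega
      have hq : p = -n - m := by omega
      subst hq
      rw [show m + (-n - m) = -n by ring, show n + (-n - m) = -m by ring]
      simp only [wA, if_neg hmp]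
      rcases eq_or_ne n 0 with hn | hn
      · have hm : ¬ (m : ℤ) = 0 := by omega
        subst hn
        rw [if_pos (show -(0:ℤ) = 0 by ring), if_neg (show ¬ (-m : ℤ) = 0 by omega)]
        push_cast; ring1
      · rcases eq_or_ne m 0 with hm | hm
        · subst hm
          rw [if_pos (show -(0:ℤ) = 0 by ring), if_neg (show ¬ (-n : ℤ) = 0 by omega)]
          push_cast; ring1
        · rw [if_neg (show ¬ (-n : ℤ) = 0 by omega), if_neg (show ¬ (-m : ℤ) = 0 by omega)]
          push_cast; ring1
  · rw [if_neg h, if_neg (by omega : ¬ m + p + n = 0), if_neg (by omega : ¬ n + p + m = 0)]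
    ring1

lemma cA_mem : mkB b (cA lam) ∈ twoCocycles L := by
  apply mem_twoCocycles_of_basis
  · intro i j
    rw [mkB_apply, mkB_apply]
    rcases i with n | n <;> rcases j with m | m <;> simp only [cA]
    · ring1
    · by_cases h : n + m = 0
      · rw [if_pos h, if_pos (by omega : m + n = 0)]
        have hm : m = -n := by omega
        subst hm
        rcases eq_or_ne n 0 with hn | hn
        · subst hn; norm_num
        · simp only [wA, if_neg hn, if_neg (show ¬ (-n : ℤ) = 0 by omega)]
          try ring1
      · rw [if_neg h, if_neg (by omega : ¬ m + n = 0)]; ring1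
    · by_cases h : n + m = 0
      · rw [if_pos h, if_pos (by omega : m + n = 0)]
        have hm : m = -n := by omega
        subst hm
        rcases eq_or_ne n 0 with hn | hn
        · subst hn; norm_num
        · simp only [wA, if_neg hn, if_neg (show ¬ (-n : ℤ) = 0 by omega)]
          try ring1
      · rw [if_neg h, if_neg (by omega : ¬ m + n = 0)]; ring1
    · ring1
  · intro i j k
    rcases i with n | n <;> rcases j with m | m <;> rcases k with p | p <;>
      simp only [hLL, hLA, hAA, hAL b hLA, map_smul, map_neg, map_zero, smul_eq_mul,
        LinearMap.smul_apply, LinearMap.neg_apply, LinearMap.zero_apply, LinearMap.map_neg,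
        mkB_apply, cA] <;>
      try ring1
    · -- L L A
      linear_combination cA_id (lam := lam) n m p
    · -- L A L
      linear_combination cA_id (lam := lam) p n m
    · -- A L L
      linear_combination cA_id (lam := lam) m p n

omit hLL hLA hAA in
lemma cB_id (n m p : ℤ) :
    ((m : ℂ) - n) * (if n + m + p = 0 then ((n + m : ℤ) : ℂ) else 0)
      + ((m : ℂ) + p + (if p = 0 then lamTerm (some 0) m else 0))
        * (if m + p + n = 0 then ((m + p : ℤ) : ℂ) else 0)
      - ((n : ℂ) + p + (if p = 0 then lamTerm (some 0) n else 0))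
        * (if n + p + m = 0 then ((n + p : ℤ) : ℂ) else 0) = 0 := by
  have l1 : lamTerm (some 0) m = 0 := by simp [lamTerm]
  have l2 : lamTerm (some 0) n = 0 := by simp [lamTerm]
  rw [l1, l2, ite_self]
  by_cases h : n + m + p = 0
  · rw [if_pos h, if_pos (by omega : m + p + n = 0), if_pos (by omega : n + p + m = 0)]
    have hq : p = -n - m := by omega
    subst hq
    push_cast; ring1
  · rw [if_neg h, if_neg (by omega : ¬ m + p + n = 0), if_neg (by omega : ¬ n + p + m = 0)]
    ring1

lemma cB_mem (hlam : lam = some 0) : mkB b cB ∈ twoCocycles L := by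
  subst hlam
  apply mem_twoCocycles_of_basis
  · intro i j
    rw [mkB_apply, mkB_apply]
    rcases i with n | n <;> rcases j with m | m <;> simp only [cB]
    · ring1
    · by_cases h : n + m = 0
      · rw [if_pos h, if_pos (by omega : m + n = 0)]
        have hm : m = -n := by omega
        subst hm; push_cast; ring1
      · rw [if_neg h, if_neg (by omega : ¬ m + n = 0)]; ring1
    · by_cases h : n + m = 0
      · rw [if_pos h, if_pos (by omega : m + n = 0)]
        have hm : m = -n := by omega
        subst hm; push_cast; ring1
      · rw [if_neg h, if_neg (by omega : ¬ m + n = 0)]; ring1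
    · ring1
  · intro i j k
    rcases i with n | n <;> rcases j with m | m <;> rcases k with p | p <;>
      simp only [hLL, hLA, hAA, hAL b hLA, map_smul, map_neg, map_zero, smul_eq_mul,
        LinearMap.smul_apply, LinearMap.neg_apply, LinearMap.zero_apply, LinearMap.map_neg,
        mkB_apply, cB] <;>
      try ring1
    · linear_combination cB_id n m p
    · linear_combination cB_id p n m
    · linear_combination cB_id m p n

end Cocycles
theorem stmt_8 (lam : Option ℂ) (L : Type) [LieRing L] [LieAlgebra ℂ L]
    (b : Module.Basis (ℤ ⊕ ℤ) ℂ L)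
    (hLL : ∀ n m : ℤ,
      ⁅b (Sum.inl n), b (Sum.inl m)⁆ = ((m : ℂ) - (n : ℂ)) • b (Sum.inl (n + m)))
    (hLA : ∀ n m : ℤ,
      ⁅b (Sum.inl n), b (Sum.inr m)⁆ =
        ((n : ℂ) + (m : ℂ) + (if m = 0 then lamTerm lam n else 0)) • b (Sum.inr (n + m)))
    (hAA : ∀ n m : ℤ, ⁅b (Sum.inr n), b (Sum.inr m)⁆ = 0) :
    Module.finrank ℂ
      (↥(twoCocycles L) ⧸ ((twoCoboundaries L).comap (twoCocycles L).subtype)) =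
      if lam = some 0 then 3 else 2 := by
  classical
  -- evaluation functionals
  let ev : L → L → ((twoCocycles L) →ₗ[ℂ] ℂ) := fun x y =>
    ((LinearMap.applyₗ y).comp (LinearMap.applyₗ x)).comp (twoCocycles L).subtype
  have ev_apply : ∀ (x y : L) (Ω : twoCocycles L), ev x y Ω = (Ω : L →ₗ[ℂ] L →ₗ[ℂ] ℂ) x y :=
    fun x y Ω => rfl
  by_cases hl : lam = some 0
  · -- dimension 3
    rw [if_pos hl]
    let F : (twoCocycles L) →ₗ[ℂ] (Fin 3 → ℂ) := LinearMap.pi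
      ![ev (b (Sum.inl 2)) (b (Sum.inl (-2))) - (2 : ℂ) • ev (b (Sum.inl 1)) (b (Sum.inl (-1))),
        ev (b (Sum.inl 1)) (b (Sum.inr (-1))),
        ev (b (Sum.inl (-1))) (b (Sum.inr 1))]
    have hker : LinearMap.ker F = (twoCoboundaries L).comap (twoCocycles L).subtype := by
      ext Ω
      simp only [LinearMap.mem_ker, Submodule.mem_comap, Submodule.coe_subtype]
      constructor
      · intro hF
        have h0 := congrFun hF 0
        have h1 := congrFun hF 1
        have h2 := congrFun hF 2
        simp only [F, LinearMap.pi_apply, Matrix.cons_val_zero, Matrix.cons_val_one,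
          Matrix.head_cons, Matrix.cons_val_two, Matrix.tail_cons, LinearMap.sub_apply,
          LinearMap.smul_apply, ev_apply, smul_eq_mul, Pi.zero_apply] at h0 h1 h2
        obtain ⟨hc1, hc2⟩ := Ω.2
        exact ker_to_cobound hLL hLA hAA Ω.1 hc1 hc2
          (by linear_combination h0) h1
          h2
      · rintro ⟨ψ, hψ⟩
        have e0 : F Ω 0 = 0 := by
          simp only [F, LinearMap.pi_apply, Matrix.cons_val_zero, LinearMap.sub_apply,
            LinearMap.smul_apply, ev_apply, smul_eq_mul]
          rw [hψ, hψ, hLL 2 (-2), hLL 1 (-1)]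
          norm_num [map_smul]
          ring1
        have e1 : F Ω 1 = 0 := by
          simp only [F, LinearMap.pi_apply, Matrix.cons_val_one, Matrix.head_cons, Matrix.cons_val_zero, ev_apply]
          rw [hψ, hLA 1 (-1)]
          norm_num
        have e2 : F Ω 2 = 0 := by
          simp only [F, LinearMap.pi_apply, Matrix.cons_val_two, Matrix.tail_cons,
            Matrix.head_cons, ev_apply]
          rw [hψ, hLA (-1) 1]
          norm_num
        funext i
        fin_cases i
        · exact e0
        · exact e1
        · exact e2
    have hsurj : Function.Surjective F := by
      intro v
      refine ⟨(v 0 / 6) • ⟨mkB b cV, cV_mem b hLL hLA hAA⟩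
        + ((v 1 + v 2)/2) • ⟨mkB b (cA lam), cA_mem b hLL hLA hAA⟩
        + ((v 1 - v 2)/2) • ⟨mkB b cB, cB_mem b hLL hLA hAA hl⟩, ?_⟩
      have c0 : ∀ (B : L →ₗ[ℂ] L →ₗ[ℂ] ℂ) (hB : B ∈ twoCocycles L),
          F ⟨B, hB⟩ 0 = B (b (Sum.inl 2)) (b (Sum.inl (-2)))
            - 2 * B (b (Sum.inl 1)) (b (Sum.inl (-1))) := fun B hB => rfl
      have c1 : ∀ (B : L →ₗ[ℂ] L →ₗ[ℂ] ℂ) (hB : B ∈ twoCocycles L),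
          F ⟨B, hB⟩ 1 = B (b (Sum.inl 1)) (b (Sum.inr (-1))) := fun B hB => rfl
      have c2 : ∀ (B : L →ₗ[ℂ] L →ₗ[ℂ] ℂ) (hB : B ∈ twoCocycles L),
          F ⟨B, hB⟩ 2 = B (b (Sum.inl (-1))) (b (Sum.inr 1)) := fun B hB => rfl
      funext i
      rw [map_add, map_add, map_smul, map_smul, map_smul]
      fin_cases i
      · show v 0 / 6 * (F _ 0) + (v 1 + v 2)/2 * (F _ 0) + (v 1 - v 2)/2 * (F _ 0) = v 0
        rw [c0, c0, c0]
        simp only [mkB_apply, cV, cA, cB]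
        norm_num
      · show v 0 / 6 * (F _ 1) + (v 1 + v 2)/2 * (F _ 1) + (v 1 - v 2)/2 * (F _ 1) = v 1
        rw [c1, c1, c1]
        simp only [mkB_apply, cV, cA, cB]
        norm_num [wA]
        ring1
      · show v 0 / 6 * (F _ 2) + (v 1 + v 2)/2 * (F _ 2) + (v 1 - v 2)/2 * (F _ 2) = v 2
        rw [c2, c2, c2]
        simp only [mkB_apply, cV, cA, cB]
        norm_num [wA]
        ring1
    rw [← hker, (LinearMap.quotKerEquivOfSurjective F hsurj).finrank_eq,
      Module.finrank_fin_fun]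
  · -- dimension 2
    rw [if_neg hl]
    let F : (twoCocycles L) →ₗ[ℂ] (Fin 2 → ℂ) := LinearMap.pi
      ![ev (b (Sum.inl 2)) (b (Sum.inl (-2))) - (2 : ℂ) • ev (b (Sum.inl 1)) (b (Sum.inl (-1))),
        ev (b (Sum.inl 1)) (b (Sum.inr (-1)))]
    have hker : LinearMap.ker F = (twoCoboundaries L).comap (twoCocycles L).subtype := by
      ext Ω
      simp only [LinearMap.mem_ker, Submodule.mem_comap, Submodule.coe_subtype]
      constructor
      · intro hF
        have h0 := congrFun hF 0
        have h1 := congrFun hF 1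
        simp only [F, LinearMap.pi_apply, Matrix.cons_val_zero, Matrix.cons_val_one,
          Matrix.head_cons, LinearMap.sub_apply,
          LinearMap.smul_apply, ev_apply, smul_eq_mul, Pi.zero_apply] at h0 h1
        obtain ⟨hc1, hc2⟩ := Ω.2
        exact ker_to_cobound hLL hLA hAA Ω.1 hc1 hc2
          (by linear_combination h0) h1
          (beta_neg_one hLL hLA hAA Ω.1 hc1 hc2 hl h1)
      · rintro ⟨ψ, hψ⟩
        have e0 : F Ω 0 = 0 := by
          simp only [F, LinearMap.pi_apply, Matrix.cons_val_zero, LinearMap.sub_apply,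
            LinearMap.smul_apply, ev_apply, smul_eq_mul]
          rw [hψ, hψ, hLL 2 (-2), hLL 1 (-1)]
          norm_num [map_smul]
          ring1
        have e1 : F Ω 1 = 0 := by
          simp only [F, LinearMap.pi_apply, Matrix.cons_val_one, Matrix.head_cons, Matrix.cons_val_zero, ev_apply]
          rw [hψ, hLA 1 (-1)]
          norm_num
        funext i
        fin_cases i
        · exact e0
        · exact e1
    have hsurj : Function.Surjective F := by
      intro v
      refine ⟨(v 0 / 6) • ⟨mkB b cV, cV_mem b hLL hLA hAA⟩
        + (v 1) • ⟨mkB b (cA lam), cA_mem b hLL hLA hAA⟩, ?_⟩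
      have c0 : ∀ (B : L →ₗ[ℂ] L →ₗ[ℂ] ℂ) (hB : B ∈ twoCocycles L),
          F ⟨B, hB⟩ 0 = B (b (Sum.inl 2)) (b (Sum.inl (-2)))
            - 2 * B (b (Sum.inl 1)) (b (Sum.inl (-1))) := fun B hB => rfl
      have c1 : ∀ (B : L →ₗ[ℂ] L →ₗ[ℂ] ℂ) (hB : B ∈ twoCocycles L),
          F ⟨B, hB⟩ 1 = B (b (Sum.inl 1)) (b (Sum.inr (-1))) := fun B hB => rfl
      funext i
      rw [map_add, map_smul, map_smul]
      fin_cases i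
      · show v 0 / 6 * (F _ 0) + v 1 * (F _ 0) = v 0
        rw [c0, c0]
        simp only [mkB_apply, cV, cA]
        norm_num
      · show v 0 / 6 * (F _ 1) + v 1 * (F _ 1) = v 1
        rw [c1, c1]
        simp only [mkB_apply, cV, cA]
        norm_num [wA]
    rw [← hker, (LinearMap.quotKerEquivOfSurjective F hsurj).finrank_eq,
      Module.finrank_fin_fun]
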